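/- Let G be a group, let g ≥ 3, and let a_1,…,a_{g−1}, y be elements of G satisfying: a_i a_j = a_j a_i for |i−j|>1; a_i a_{i+1} a_i = a_{i+1} a_i a_{i+1} for i=1,…,g−2; a_i y = y a_i for i=3,…,g−1; and a_1 y = y a_1^{−1}. Set M = a_1⋯a_{g−1}, u_1 = a_1 y, and u_i = M^{i−1} u_1^{(−1)^{i−1}} M^{−(i−1)} for i = 2,…,g−1. Then for each i = 1,…,g−2, the relation (C3) a_{i+1} u_i u_{i+1} = u_i u_{i+1} a_i holds if and only if relation (C2') holds: a_2 (y a_2 y^{−1}) = (y a_2 y^{−1}) a_2. -/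

import Mathlib

private lemma range'_app (s m n : ℕ) :
    List.range' s m ++ List.range' (s+m) n = List.range' s (m+n) := by
  have : List.range' s m 1 ++ List.range' (s + 1 * m) n 1 = List.range' s (m + n) 1 :=
    List.range'_append
  simp only [one_mul, mul_one] at this
  exact this

theorem stmt_14 {G : Type*} [Group G] (g : ℕ) (hg : 3 ≤ g) (a : ℕ → G) (y : G)
    (hA1 : ∀ i j, 1 ≤ i → j ≤ g - 1 → i + 1 < j → a i * a j = a j * a i)
    (hA2 : ∀ i, 1 ≤ i → i ≤ g - 2 → a i * a (i + 1) * a i = a (i + 1) * a i * a (i + 1))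
    (hC1' : ∀ i, 3 ≤ i → i ≤ g - 1 → a i * y = y * a i)
    (hC4' : a 1 * y = y * (a 1)⁻¹)
    (M u1 : G) (u : ℕ → G)
    (hM : M = ((List.range' 1 (g - 1)).map a).prod)
    (hu1 : u1 = a 1 * y)
    (hu : ∀ i, 1 ≤ i → i ≤ g - 1 → u i = M ^ (i - 1) * u1 ^ ((-1 : ℤ) ^ (i - 1)) * (M ^ (i - 1))⁻¹) :
    ∀ i, 1 ≤ i → i ≤ g - 2 →
      (a (i + 1) * u i * u (i + 1) = u i * u (i + 1) * a i ↔
        a 2 * (y * a 2 * y⁻¹) = (y * a 2 * y⁻¹) * a 2) := by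
  -- generic conjugation iff
  have conj_iff : ∀ t p q : G, (t * p * t⁻¹ = t * q * t⁻¹) ↔ p = q := by
    intro t p q
    constructor
    · intro h; exact mul_left_cancel (mul_right_cancel h)
    · intro h; rw [h]
  -- shift relation M * a j = a (j+1) * M
  have hshift : ∀ j, 1 ≤ j → j + 1 ≤ g - 1 → M * a j = a (j+1) * M := by
    intro j hj1 hj2
    have hsplit : List.range' 1 (g-1) =
        List.range' 1 (j-1) ++ [j, j+1] ++ List.range' (j+2) (g-1-(j+1)) := by
      have h1 : List.range' 1 (j-1) ++ List.range' (1+(j-1)) 2 = List.range' 1 ((j-1)+2) :=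
        range'_app 1 (j-1) 2
      have h2 : List.range' 1 ((j-1)+2) ++ List.range' (1+((j-1)+2)) (g-1-(j+1))
          = List.range' 1 (((j-1)+2)+(g-1-(j+1))) := range'_app 1 ((j-1)+2) (g-1-(j+1))
      have e1 : 1+(j-1) = j := by omega
      have e2 : List.range' j 2 = [j, j+1] := rfl
      have e3 : 1+((j-1)+2) = j+2 := by omega
      have e4 : ((j-1)+2)+(g-1-(j+1)) = g-1 := by omega
      rw [e1, e2] at h1
      rw [e3, e4] at h2
      rw [← h2, ← h1]
    have hPcomm : a (j+1) * ((List.range' 1 (j-1)).map a).prod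
        = ((List.range' 1 (j-1)).map a).prod * a (j+1) := by
      refine (Commute.list_prod_right _ _ ?_)
      intro x hx
      simp only [List.mem_map, List.mem_range'] at hx
      obtain ⟨k, ⟨hk1, hk2⟩, rfl⟩ := hx
      exact (hA1 k (j+1) (by omega) (by omega) (by omega)).symm
    have hScomm : a j * ((List.range' (j+2) (g-1-(j+1))).map a).prod
        = ((List.range' (j+2) (g-1-(j+1))).map a).prod * a j := by
      refine (Commute.list_prod_right _ _ ?_)
      intro x hx
      simp only [List.mem_map, List.mem_range'] at hx
      obtain ⟨k, ⟨hk1, hk2⟩, rfl⟩ := hx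
      exact hA1 j k (by omega) (by omega) (by omega)
    set P := ((List.range' 1 (j-1)).map a).prod with hP
    set S := ((List.range' (j+2) (g-1-(j+1))).map a).prod with hS
    have hMeq : M = P * (a j * (a (j+1) * S)) := by
      rw [hM, hsplit]
      simp [List.prod_append, mul_assoc]
      rfl
    have hbraid := hA2 j hj1 (by omega)
    calc M * a j = P * (a j * a (j+1)) * (S * a j) := by rw [hMeq]; group
      _ = P * (a j * a (j+1)) * (a j * S) := by rw [← hScomm]
      _ = P * (a j * a (j+1) * a j) * S := by group
      _ = P * (a (j+1) * a j * a (j+1)) * S := by rw [hbraid]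
      _ = (a (j+1) * P) * (a j * (a (j+1) * S)) := by rw [hPcomm]; group
      _ = a (j+1) * M := by rw [hMeq]; group
  -- iterate: M^k * a j = a (j+k) * M^k
  have hpow : ∀ k j, 1 ≤ j → j + k ≤ g - 1 → M ^ k * a j = a (j + k) * M ^ k := by
    intro k
    induction k with
    | zero => intro j _ _; simp
    | succ n ih =>
      intro j hj1 hj2
      have h1 := ih j hj1 (by omega)
      have h2 := hshift (j+n) (by omega) (by omega)
      calc M ^ (n+1) * a j = M * (M ^ n * a j) := by rw [pow_succ']; group
        _ = M * (a (j+n) * M ^ n) := by rw [h1]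
        _ = (M * a (j+n)) * M ^ n := by group
        _ = (a (j+n+1) * M) * M ^ n := by rw [h2]
        _ = a (j+(n+1)) * M ^ (n+1) := by rw [pow_succ']; group
  -- decomposition M = a 1 * a 2 * N
  set N := ((List.range' 3 (g-3)).map a).prod with hN
  have hMsplit : M = a 1 * a 2 * N := by
    have h1 : List.range' 1 2 ++ List.range' 3 (g-3) = List.range' 1 (g-1) := by
      have := range'_app 1 2 (g-3)
      have e : 2 + (g-3) = g-1 := by omega
      rwa [e] at this
    rw [hM, ← h1]
    simp [List.prod_append, List.range', mul_assoc]
    rfl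
  have hNy : y * N = N * y := by
    refine (Commute.list_prod_right _ _ ?_)
    intro x hx
    simp only [List.mem_map, List.mem_range'] at hx
    obtain ⟨k, ⟨hk1, hk2⟩, rfl⟩ := hx
    exact (hC1' k (by omega) (by omega)).symm
  have hNa1 : a 1 * N = N * a 1 := by
    refine (Commute.list_prod_right _ _ ?_)
    intro x hx
    simp only [List.mem_map, List.mem_range'] at hx
    obtain ⟨k, ⟨hk1, hk2⟩, rfl⟩ := hx
    exact hA1 1 k (by omega) (by omega) (by omega)
  have hyN : y * N * y⁻¹ = N := by rw [hNy]; group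
  have hNa1inv : N * (a 1)⁻¹ = (a 1)⁻¹ * N := by
    have : (a 1)⁻¹ * (a 1 * N) * (a 1)⁻¹ = (a 1)⁻¹ * (N * a 1) * (a 1)⁻¹ := by rw [hNa1]
    calc N * (a 1)⁻¹ = (a 1)⁻¹ * (a 1 * N) * (a 1)⁻¹ := by group
      _ = (a 1)⁻¹ * (N * a 1) * (a 1)⁻¹ := this
      _ = (a 1)⁻¹ * N := by group
  -- a1/y conjugation facts
  have hy1 : y⁻¹ * a 1 * y = (a 1)⁻¹ := by
    rw [mul_assoc, hC4']; group
  have hy2 : y * a 1 * y⁻¹ = (a 1)⁻¹ := by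
    have h : a 1 = y * (a 1)⁻¹ * y⁻¹ := by rw [← hC4']; group
    conv_rhs => rw [h]
    group
  -- braid for indices 1,2 and the pivot identity
  have hb : a 1 * a 2 * a 1 = a 2 * a 1 * a 2 := by
    simpa using hA2 1 le_rfl (by omega)
  have hbinv : (a 1)⁻¹ * ((a 2)⁻¹ * (a 1)⁻¹) = (a 2)⁻¹ * ((a 1)⁻¹ * (a 2)⁻¹) := by
    have := congrArg Inv.inv hb
    simpa [mul_inv_rev, mul_assoc] using this
  have hq0a : ((a 1)⁻¹ * ((a 2)⁻¹ * (a 1)⁻¹)) * a 1 = a 2 * ((a 1)⁻¹ * ((a 2)⁻¹ * (a 1)⁻¹)) := by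
    conv_rhs => rw [hbinv]
    group
  -- the two computations of u1^{±1} M u1^{∓1} M⁻¹
  have hX1 : u1 * M * u1⁻¹ * M⁻¹ = (y * a 2 * y⁻¹) * ((a 1)⁻¹ * ((a 2)⁻¹ * (a 1)⁻¹)) := by
    calc u1 * M * u1⁻¹ * M⁻¹
        = (a 1 * y) * (a 1 * a 2 * N) * (a 1 * y)⁻¹ * (a 1 * a 2 * N)⁻¹ := by
          rw [hu1, hMsplit]
      _ = a 1 * (y * a 1 * y⁻¹) * (y * a 2 * y⁻¹) * (y * N * y⁻¹) * (a 1)⁻¹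
          * N⁻¹ * (a 2)⁻¹ * (a 1)⁻¹ := by group
      _ = a 1 * (a 1)⁻¹ * (y * a 2 * y⁻¹) * N * (a 1)⁻¹ * N⁻¹ * (a 2)⁻¹ * (a 1)⁻¹ := by
          rw [hy2, hyN]
      _ = (y * a 2 * y⁻¹) * (N * (a 1)⁻¹) * N⁻¹ * (a 2)⁻¹ * (a 1)⁻¹ := by group
      _ = (y * a 2 * y⁻¹) * ((a 1)⁻¹ * N) * N⁻¹ * (a 2)⁻¹ * (a 1)⁻¹ := by rw [hNa1inv]
      _ = (y * a 2 * y⁻¹) * ((a 1)⁻¹ * ((a 2)⁻¹ * (a 1)⁻¹)) := by group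
  have hX2 : u1⁻¹ * M * u1 * M⁻¹ = (y⁻¹ * a 2 * y) * ((a 1)⁻¹ * ((a 2)⁻¹ * (a 1)⁻¹)) := by
    calc u1⁻¹ * M * u1 * M⁻¹
        = (a 1 * y)⁻¹ * (a 1 * a 2 * N) * (a 1 * y) * (a 1 * a 2 * N)⁻¹ := by
          rw [hu1, hMsplit]
      _ = y⁻¹ * a 2 * (N * a 1) * y * N⁻¹ * (a 2)⁻¹ * (a 1)⁻¹ := by group
      _ = y⁻¹ * a 2 * (a 1 * N) * y * N⁻¹ * (a 2)⁻¹ * (a 1)⁻¹ := by rw [← hNa1]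
      _ = y⁻¹ * a 2 * a 1 * (N * y) * N⁻¹ * (a 2)⁻¹ * (a 1)⁻¹ := by group
      _ = y⁻¹ * a 2 * a 1 * (y * N) * N⁻¹ * (a 2)⁻¹ * (a 1)⁻¹ := by rw [← hNy]
      _ = (y⁻¹ * a 2 * y) * (y⁻¹ * a 1 * y) * ((a 2)⁻¹ * (a 1)⁻¹) := by group
      _ = (y⁻¹ * a 2 * y) * (a 1)⁻¹ * ((a 2)⁻¹ * (a 1)⁻¹) := by rw [hy1]
      _ = (y⁻¹ * a 2 * y) * ((a 1)⁻¹ * ((a 2)⁻¹ * (a 1)⁻¹)) := by group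
  -- relating the two C2' forms
  have cIff : (a 2 * (y⁻¹ * a 2 * y) = (y⁻¹ * a 2 * y) * a 2)
      ↔ (a 2 * (y * a 2 * y⁻¹) = (y * a 2 * y⁻¹) * a 2) := by
    constructor <;> intro h
    · calc a 2 * (y * a 2 * y⁻¹) = y * ((y⁻¹ * a 2 * y) * a 2) * y⁻¹ := by group
        _ = y * (a 2 * (y⁻¹ * a 2 * y)) * y⁻¹ := by rw [← h]
        _ = (y * a 2 * y⁻¹) * a 2 := by group
    · calc a 2 * (y⁻¹ * a 2 * y) = y⁻¹ * ((y * a 2 * y⁻¹) * a 2) * y := by group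
        _ = y⁻¹ * (a 2 * (y * a 2 * y⁻¹)) * y := by rw [← h]
        _ = (y⁻¹ * a 2 * y) * a 2 := by group
  -- main part
  intro i hi1 hi2
  obtain ⟨ri, rfl⟩ : ∃ k, i = k + 1 := ⟨i - 1, by omega⟩
  have key : ∀ v v' w : G,
      v * M * v' * M⁻¹ = w * ((a 1)⁻¹ * ((a 2)⁻¹ * (a 1)⁻¹)) →
      ((a (ri+1+1) * (M ^ ri * v * (M ^ ri)⁻¹) * (M ^ (ri+1) * v' * (M ^ (ri+1))⁻¹)
        = (M ^ ri * v * (M ^ ri)⁻¹) * (M ^ (ri+1) * v' * (M ^ (ri+1))⁻¹) * a (ri+1))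
       ↔ a 2 * w = w * a 2) := by
    intro v v' w hX
    have hA' : M ^ ri * a 2 = a (ri+1+1) * M ^ ri := by
      have := hpow ri 2 (by omega) (by omega)
      have e : 2 + ri = ri + 1 + 1 := by omega
      rwa [e] at this
    have hB' : M ^ ri * a 1 = a (ri+1) * M ^ ri := by
      have := hpow ri 1 (by omega) (by omega)
      have e : 1 + ri = ri + 1 := by omega
      rwa [e] at this
    have hA2'' : a (ri+1+1) = M ^ ri * a 2 * (M ^ ri)⁻¹ := by rw [hA']; group
    have hB2 : a (ri+1) = M ^ ri * a 1 * (M ^ ri)⁻¹ := by rw [hB']; group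
    have hps : M ^ (ri+1) = M ^ ri * M := pow_succ M ri
    rw [hA2'', hB2, hps]
    have lhs_eq : (M ^ ri * a 2 * (M ^ ri)⁻¹) * (M ^ ri * v * (M ^ ri)⁻¹)
        * (M ^ ri * M * v' * (M ^ ri * M)⁻¹)
        = M ^ ri * (a 2 * (v * M * v' * M⁻¹)) * (M ^ ri)⁻¹ := by group
    have rhs_eq : (M ^ ri * v * (M ^ ri)⁻¹) * (M ^ ri * M * v' * (M ^ ri * M)⁻¹)
        * (M ^ ri * a 1 * (M ^ ri)⁻¹)
        = M ^ ri * ((v * M * v' * M⁻¹) * a 1) * (M ^ ri)⁻¹ := by group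
    rw [lhs_eq, rhs_eq, conj_iff, hX]
    have h1 : a 2 * (w * ((a 1)⁻¹ * ((a 2)⁻¹ * (a 1)⁻¹)))
        = (a 2 * w) * ((a 1)⁻¹ * ((a 2)⁻¹ * (a 1)⁻¹)) := by group
    have h2 : (w * ((a 1)⁻¹ * ((a 2)⁻¹ * (a 1)⁻¹))) * a 1
        = (w * a 2) * ((a 1)⁻¹ * ((a 2)⁻¹ * (a 1)⁻¹)) := by
      rw [mul_assoc, hq0a, ← mul_assoc]
    rw [h1, h2, mul_left_inj]
  rw [hu (ri+1) (by omega) (by omega), hu (ri+1+1) (by omega) (by omega)]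
  simp only [Nat.add_sub_cancel]
  rcases Nat.even_or_odd ri with hpar | hpar
  · rw [Even.neg_one_pow hpar, Odd.neg_one_pow (Even.add_one hpar), zpow_one, zpow_neg_one]
    exact key u1 u1⁻¹ (y * a 2 * y⁻¹) hX1
  · rw [Odd.neg_one_pow hpar, Even.neg_one_pow (Odd.add_one hpar), zpow_one, zpow_neg_one]
    exact (key u1⁻¹ u1 (y⁻¹ * a 2 * y) hX2).trans cIff
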